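/- Let f = f̄ − f̲ where f̄ is normalized, nondecreasing, and α-weakly DR-submodular and f̲ is normalized, nondecreasing, and β-weakly DR-supermodular. Let g be the Lovász subgradient vector at x ∈ [0,1]^n, i.e., g_{π(i)} = f(A_i) − f(A_{i−1}) along the decreasing-order chain of x. Then for every A ⊆ [n], g(A) := Σ_{i∈A} g_i ≤ (1/α) f̄(A) − β f̲(A). -/

import Mathlib

/-- The chain `A_i = {π(1),…,π(i)}` induced by a sorting permutation `π`. -/
def lovaszChain (n : ℕ) (π : Equiv.Perm (Fin n)) (i : ℕ) : Finset (Fin n) :=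
  Finset.univ.filter (fun a : Fin n => ((π.symm a : ℕ)) < i)

lemma lovaszChain_zero (n : ℕ) (π : Equiv.Perm (Fin n)) : lovaszChain n π 0 = ∅ := by
  ext a; simp [lovaszChain]

lemma lovaszChain_top (n : ℕ) (π : Equiv.Perm (Fin n)) : lovaszChain n π n = Finset.univ := by
  ext a; simp [lovaszChain, (π.symm a).isLt]

lemma lovaszChain_succ (n : ℕ) (π : Equiv.Perm (Fin n)) (k : Fin n) :
    lovaszChain n π ((k : ℕ) + 1) = insert (π k) (lovaszChain n π (k : ℕ)) := by
  ext a
  simp only [lovaszChain, Finset.mem_filter, Finset.mem_univ, true_and, Finset.mem_insert,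
    Nat.lt_succ_iff_lt_or_eq]
  constructor
  · rintro (h | h)
    · exact Or.inr h
    · left
      have : π.symm a = k := Fin.ext h
      rw [← this, Equiv.apply_symm_apply]
  · rintro (h | h)
    · right; rw [h, Equiv.symm_apply_apply]
    · exact Or.inl h

lemma not_mem_lovaszChain (n : ℕ) (π : Equiv.Perm (Fin n)) (k : Fin n) :
    π k ∉ lovaszChain n π (k : ℕ) := by
  simp [lovaszChain]

theorem subgradient_set_bound (n : ℕ) (α β : ℝ) (hα : 0 < α) (hβ : 0 < β)
    (fbar fund : Finset (Fin n) → ℝ)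
    (hbar0 : fbar ∅ = 0) (hund0 : fund ∅ = 0)
    (hbarmono : ∀ A B : Finset (Fin n), A ⊆ B → fbar A ≤ fbar B)
    (hundmono : ∀ A B : Finset (Fin n), A ⊆ B → fund A ≤ fund B)
    (hbarDR : ∀ A B : Finset (Fin n), A ⊆ B → ∀ i ∉ B,
      fbar (insert i A) - fbar A ≥ α * (fbar (insert i B) - fbar B))
    (hundDR : ∀ A B : Finset (Fin n), A ⊆ B → ∀ i ∉ B,
      fund (insert i B) - fund B ≥ β * (fund (insert i A) - fund A))
    (f : Finset (Fin n) → ℝ) (hfdef : ∀ S, f S = fbar S - fund S)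
    (x : Fin n → ℝ) (hx : ∀ j, x j ∈ Set.Icc (0:ℝ) 1)
    (π : Equiv.Perm (Fin n)) (v : ℕ → ℝ)
    (hv0 : v 0 = 1) (hvn : v (n+1) = 0)
    (hvx : ∀ k : Fin n, v ((k : ℕ) + 1) = x (π k))
    (hmono : ∀ i j : ℕ, i ≤ j → j ≤ n + 1 → v j ≤ v i)
    (g : Fin n → ℝ)
    (hg : ∀ k : Fin n, g (π k) = f (lovaszChain n π ((k : ℕ) + 1)) - f (lovaszChain n π (k : ℕ))) :
    ∀ A : Finset (Fin n), (∑ i ∈ A, g i) ≤ (1/α) * fbar A - β * fund A := by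
  intro A
  set L : ℕ → Finset (Fin n) := lovaszChain n π with hL
  set Φ : ℕ → ℝ := fun m => (1/α) * fbar (A ∩ L m) - β * fund (A ∩ L m) with hΦ
  have step : ∀ k : Fin n, (if π k ∈ A then g (π k) else 0) ≤ Φ ((k : ℕ) + 1) - Φ (k : ℕ) := by
    intro k
    have hsucc : L ((k : ℕ) + 1) = insert (π k) (L (k : ℕ)) := lovaszChain_succ n π k
    have hnm : π k ∉ L (k : ℕ) := not_mem_lovaszChain n π k
    by_cases hkA : π k ∈ A
    · simp only [if_pos hkA]
      have hins : A ∩ L ((k : ℕ) + 1) = insert (π k) (A ∩ L (k : ℕ)) := by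
        rw [hsucc]; ext a
        simp only [Finset.mem_inter, Finset.mem_insert]
        constructor
        · rintro ⟨ha, h | h⟩
          · exact Or.inl h
          · exact Or.inr ⟨ha, h⟩
        · rintro (h | ⟨ha, h⟩)
          · exact ⟨h ▸ hkA, Or.inl h⟩
          · exact ⟨ha, Or.inr h⟩
      have hsub : A ∩ L (k : ℕ) ⊆ L (k : ℕ) := Finset.inter_subset_right
      have hb := hbarDR (A ∩ L (k : ℕ)) (L (k : ℕ)) hsub (π k) hnm
      have hu := hundDR (A ∩ L (k : ℕ)) (L (k : ℕ)) hsub (π k) hnm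
      rw [← hins, ← hsucc] at hb hu
      have h1 : fbar (L ((k : ℕ) + 1)) - fbar (L (k : ℕ))
          ≤ (1/α) * (fbar (A ∩ L ((k : ℕ) + 1)) - fbar (A ∩ L (k : ℕ))) := by
        rw [ge_iff_le] at hb
        rw [one_div, ← div_eq_inv_mul, le_div_iff₀ hα]
        nlinarith
      have h2 : β * (fund (A ∩ L ((k : ℕ) + 1)) - fund (A ∩ L (k : ℕ)))
          ≤ fund (L ((k : ℕ) + 1)) - fund (L (k : ℕ)) := hu
      rw [hg k, hfdef, hfdef]
      simp only [hΦ]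
      linarith
    · simp only [if_neg hkA]
      have heq : A ∩ L ((k : ℕ) + 1) = A ∩ L (k : ℕ) := by
        rw [hsucc]; ext a
        simp only [Finset.mem_inter, Finset.mem_insert]
        constructor
        · rintro ⟨ha, h | h⟩
          · exact absurd (h ▸ ha) hkA
          · exact ⟨ha, h⟩
        · rintro ⟨ha, h⟩; exact ⟨ha, Or.inr h⟩
      simp [hΦ, heq]
  have hsum1 : (∑ i ∈ A, g i) = ∑ k : Fin n, (if π k ∈ A then g (π k) else 0) := by
    have h0 : (∑ k : Fin n, if π k ∈ A then g (π k) else 0)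
        = ∑ i : Fin n, if i ∈ A then g i else 0 :=
      Fintype.sum_equiv π _ _ (fun k => rfl)
    rw [h0, Finset.sum_ite_mem, Finset.univ_inter]
  calc (∑ i ∈ A, g i) = ∑ k : Fin n, (if π k ∈ A then g (π k) else 0) := hsum1
    _ ≤ ∑ k : Fin n, (Φ ((k : ℕ) + 1) - Φ (k : ℕ)) := Finset.sum_le_sum (fun k _ => step k)
    _ = ∑ m ∈ Finset.range n, (Φ (m + 1) - Φ m) :=
        Fin.sum_univ_eq_sum_range (fun m => Φ (m + 1) - Φ m) n
    _ = Φ n - Φ 0 := Finset.sum_range_sub Φ n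
    _ = (1/α) * fbar A - β * fund A := by
        simp only [hΦ]
        rw [hL]
        rw [lovaszChain_top, lovaszChain_zero, Finset.inter_univ, Finset.inter_empty, hbar0, hund0]
        ring
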